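/- Fix m ∈ ℕ, m ≥ 1, and positive real numbers ξ₁, …, ξ_m. Then the Root-estimator converges to the CFG-estimator as p → ∞: lim_{p→∞} Γ(1+1/p)^p · ( (1/m) Σ_{i=1}^m ξ_i^{1/p} )^{−p} = e^{−γ} · exp( −(1/m) Σ_{i=1}^m log ξ_i ). -/

import Mathlib

open Real Filter

/-- As `p → ∞`, the Root-estimator based on the sample `ξ₁, …, ξ_m` converges to the
CFG-estimator:
`lim_{p→∞} Γ(1+1/p)^p ((1/m) Σ ξ_i^{1/p})^{-p} = e^{-γ} exp(-(1/m) Σ log ξ_i)`. -/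
theorem root_tendsto_cfg (m : ℕ) (hm : 1 ≤ m) (ξ : Fin m → ℝ) (hξ : ∀ i, 0 < ξ i) :
    Tendsto
      (fun p : ℝ =>
        Real.Gamma (1 + 1 / p) ^ p * ((1 / (m : ℝ)) * ∑ i, ξ i ^ (1 / p)) ^ (-p))
      atTop
      (nhds (Real.exp (-Real.eulerMascheroniConstant) *
        Real.exp (-((1 / (m : ℝ)) * ∑ i, Real.log (ξ i))))) := by
  have hm0 : (0 : ℝ) < m := by exact_mod_cast hm
  set S : ℝ → ℝ := fun t => (1 / (m : ℝ)) * ∑ i, Real.exp (t * Real.log (ξ i)) with hS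
  set F : ℝ → ℝ := fun t => Real.log (Real.Gamma (1 + t)) - Real.log (S t) with hF
  have hS0 : S 0 = 1 := by
    simp [hS, Finset.card_univ]
    field_simp
  have hF0 : F 0 = 0 := by simp [hF, hS0, Real.Gamma_one]
  -- derivative of F at 0
  have hG : HasDerivAt (fun t : ℝ => Real.Gamma (1 + t)) (-Real.eulerMascheroniConstant) 0 := by
    have h := Real.hasDerivAt_Gamma_one
    rw [show (1:ℝ) = 1 + 0 by ring] at h
    have h2 : HasDerivAt (fun t : ℝ => 1 + t) 1 0 := by
      simpa using (hasDerivAt_id (0 : ℝ)).const_add 1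
    have h3 := h.comp 0 h2
    rw [mul_one] at h3
    exact h3
  have hlogG : HasDerivAt (fun t => Real.log (Real.Gamma (1 + t)))
      (-Real.eulerMascheroniConstant) 0 := by
    have := hG.log (by simp [Real.Gamma_one])
    simpa [Real.Gamma_one] using this
  have hSder : HasDerivAt S ((1 / (m : ℝ)) * ∑ i, Real.log (ξ i)) 0 := by
    have : HasDerivAt (fun t : ℝ => ∑ i, Real.exp (t * Real.log (ξ i)))
        (∑ i, Real.log (ξ i)) 0 := by
      have : HasDerivAt (fun t : ℝ => ∑ i, Real.exp (t * Real.log (ξ i)))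
          (∑ i, Real.exp (0 * Real.log (ξ i)) * Real.log (ξ i)) 0 := by
        apply HasDerivAt.fun_sum
        intro i _
        have h1 : HasDerivAt (fun t : ℝ => t * Real.log (ξ i)) (Real.log (ξ i)) 0 := by
          simpa using (hasDerivAt_id (0 : ℝ)).mul_const (Real.log (ξ i))
        simpa using h1.exp
      simpa using this
    simpa [hS] using this.const_mul (1 / (m : ℝ))
  have hlogS : HasDerivAt (fun t => Real.log (S t))
      ((1 / (m : ℝ)) * ∑ i, Real.log (ξ i)) 0 := by
    have := hSder.log (by rw [hS0]; norm_num)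
    simpa [hS0] using this
  have hFder : HasDerivAt F
      (-Real.eulerMascheroniConstant - (1 / (m : ℝ)) * ∑ i, Real.log (ξ i)) 0 :=
    hlogG.sub hlogS
  -- slope convergence
  have hslope := hasDerivAt_iff_tendsto_slope.mp hFder
  have hinv : Tendsto (fun p : ℝ => 1 / p) atTop (nhdsWithin 0 {(0:ℝ)}ᶜ) := by
    apply tendsto_nhdsWithin_of_tendsto_nhds_of_eventually_within
    · simpa using tendsto_inv_atTop_zero
    · filter_upwards [eventually_gt_atTop (0:ℝ)] with p hp
      simp [ne_of_gt, one_div, inv_pos.mpr hp, (inv_pos.mpr hp).ne']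
  have hmain : Tendsto (fun p : ℝ => p * F (1 / p)) atTop
      (nhds (-Real.eulerMascheroniConstant - (1 / (m : ℝ)) * ∑ i, Real.log (ξ i))) := by
    have := hslope.comp hinv
    apply this.congr'
    filter_upwards [eventually_gt_atTop (0:ℝ)] with p hp
    simp only [Function.comp_apply, slope, hF0, vsub_eq_sub, sub_zero]
    field_simp
    exact smul_eq_mul _ _
  have hexp := (Real.continuous_exp.continuousAt.tendsto.comp hmain)
  have heq : Real.exp (-Real.eulerMascheroniConstant - (1 / (m : ℝ)) * ∑ i, Real.log (ξ i))
      = Real.exp (-Real.eulerMascheroniConstant) *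
        Real.exp (-((1 / (m : ℝ)) * ∑ i, Real.log (ξ i))) := by
    rw [← Real.exp_add]; ring_nf
  rw [← heq]
  apply hexp.congr'
  filter_upwards [eventually_gt_atTop (0:ℝ)] with p hp
  have hp1 : 0 < 1 / p := by positivity
  have hGpos : 0 < Real.Gamma (1 + 1 / p) := Real.Gamma_pos_of_pos (by linarith)
  have hSpos : 0 < S (1 / p) := by
    apply mul_pos (by positivity)
    apply Finset.sum_pos (fun i _ => Real.exp_pos _)
    exact Finset.univ_nonempty_iff.mpr (Fin.pos_iff_nonempty.mp (by omega))
  have hrw : ∀ i, ξ i ^ (1 / p) = Real.exp ((1 / p) * Real.log (ξ i)) := fun i =>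
    (Real.rpow_def_of_pos (hξ i) _).trans (by rw [mul_comm])
  simp only [Function.comp_apply]
  rw [show ((1 / (m : ℝ)) * ∑ i, ξ i ^ (1 / p)) = S (1/p) by rw [hS]; simp_rw [hrw]]
  rw [Real.rpow_def_of_pos hGpos, Real.rpow_def_of_pos hSpos, ← Real.exp_add]
  congr 1
  simp only [hF]
  ring
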